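/- arXiv:1902.01461 — 8 statements merged into one kernel-verified Lean document; each statement's English description precedes it below -/
import Mathlib

section
/- Let T be a finite type. For every decision tree 𝒯 over T and every set function f : Finset T → ℝ that is monotone and submodular with f(∅) = 0, the adaptive value is at most twice the non-adaptive value: adap(𝒯, f) ≤ 2 · alg(𝒯, f). (Upper bound of Theorem 3.1: the adaptivity gap for stochastic multi-value probing with monotone submodular objectives is at most 2.) -/
open Finset

/-- A decision tree over a finite type `T`: either a leaf, or a node with a
probability mass function `μ : T → ℝ` and a child tree for each type `t : T`. -/
inductive DTree (T : Type*) where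
  | leaf : DTree T
  | node : (T → ℝ) → (T → DTree T) → DTree T

/-- All distributions appearing in the tree are probability mass functions. -/
def DTree.valid {T : Type*} [Fintype T] : DTree T → Prop
  | .leaf => True
  | .node μ c => (∀ t, 0 ≤ μ t) ∧ (∑ t, μ t) = 1 ∧ ∀ t, (c t).valid

/-- Contraction `f_S(A) = f(S ∪ A) − f(S)`. -/
def contract {T : Type*} [DecidableEq T] (f : Finset T → ℝ) (S : Finset T) :
    Finset T → ℝ :=
  fun A => f (S ∪ A) - f S

/-- Adaptive value: `adap(leaf, f) = 0`,
`adap(node μ c, f) = E_{I∼μ}[ f({I}) + adap(c(I), f_{{I}}) ]`. -/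
noncomputable def adap {T : Type*} [Fintype T] [DecidableEq T] :
    DTree T → (Finset T → ℝ) → ℝ
  | .leaf, _ => 0
  | .node μ c, f => ∑ t, μ t * (f {t} + adap (c t) (contract f {t}))

/-- Random-walk non-adaptive value: `alg(leaf, f) = 0`,
`alg(node μ c, f) = E_{I∼μ} E_{R∼μ}[ f({R}) + alg(c(I), f_{{R}}) ]`. -/
noncomputable def alg {T : Type*} [Fintype T] [DecidableEq T] :
    DTree T → (Finset T → ℝ) → ℝ
  | .leaf, _ => 0
  | .node μ c, f => ∑ i, ∑ r, μ i * μ r * (f {r} + alg (c i) (contract f {r}))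

section Aux

variable {T : Type*} [Fintype T] [DecidableEq T]

lemma contract_contract (f : Finset T → ℝ) (S : Finset T) (t : T) :
    contract (contract f S) {t} = contract f (S ∪ {t}) := by
  funext A
  simp only [contract, union_assoc]
  ring

lemma marg_le (f : Finset T → ℝ)
    (hmono : ∀ A B : Finset T, A ⊆ B → f A ≤ f B)
    (hsub : ∀ A B : Finset T, f (A ∪ B) + f (A ∩ B) ≤ f A + f B)
    {A B : Finset T} (hAB : A ⊆ B) (C : Finset T) :
    f (B ∪ C) - f B ≤ f (A ∪ C) - f A := by
  have h := hsub (A ∪ C) B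
  have h1 : A ∪ C ∪ B = B ∪ C := by
    rw [union_right_comm, union_eq_right.mpr hAB]
  have h2 : f A ≤ f ((A ∪ C) ∩ B) :=
    hmono _ _ (subset_inter subset_union_left hAB)
  rw [h1] at h
  linarith

lemma adap_contract_le (f : Finset T → ℝ)
    (hmono : ∀ A B : Finset T, A ⊆ B → f A ≤ f B) :
    ∀ 𝒯 : DTree T, 𝒯.valid → ∀ S S' : Finset T, S ⊆ S' →
      adap 𝒯 (contract f S) ≤ adap 𝒯 (contract f S') + (f S' - f S) := by
  intro 𝒯
  induction 𝒯 with
  | leaf =>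
      intro _ S S' h
      simp only [adap]
      linarith [hmono S S' h]
  | node μ c ih =>
      rintro ⟨hpos, hsum, hc⟩ S S' hSS
      simp only [adap, contract_contract]
      have hrw : f S' - f S = ∑ t, μ t * (f S' - f S) := by
        rw [← Finset.sum_mul, hsum, one_mul]
      rw [hrw, ← Finset.sum_add_distrib]
      refine Finset.sum_le_sum fun t _ => ?_
      rw [← mul_add]
      refine mul_le_mul_of_nonneg_left ?_ (hpos t)
      have h1 := ih t (hc t) (S ∪ {t}) (S' ∪ {t}) (union_subset_union hSS Subset.rfl)
      have c1 : contract f S {t} = f (S ∪ {t}) - f S := rfl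
      have c2 : contract f S' {t} = f (S' ∪ {t}) - f S' := rfl
      rw [c1, c2]
      linarith

lemma alg_contract_anti (f : Finset T → ℝ)
    (hmono : ∀ A B : Finset T, A ⊆ B → f A ≤ f B)
    (hsub : ∀ A B : Finset T, f (A ∪ B) + f (A ∩ B) ≤ f A + f B) :
    ∀ 𝒯 : DTree T, 𝒯.valid → ∀ S S' : Finset T, S ⊆ S' →
      alg 𝒯 (contract f S') ≤ alg 𝒯 (contract f S) := by
  intro 𝒯
  induction 𝒯 with
  | leaf => intro _ S S' _; simp [alg]
  | node μ c ih =>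
      rintro ⟨hpos, hsum, hc⟩ S S' hSS
      simp only [alg, contract_contract]
      refine Finset.sum_le_sum fun i _ => Finset.sum_le_sum fun r _ => ?_
      refine mul_le_mul_of_nonneg_left ?_ (mul_nonneg (hpos i) (hpos r))
      have h1 := ih i (hc i) (S ∪ {r}) (S' ∪ {r}) (union_subset_union hSS Subset.rfl)
      have h4 := marg_le f hmono hsub hSS ({r} : Finset T)
      have c1 : contract f S {r} = f (S ∪ {r}) - f S := rfl
      have c2 : contract f S' {r} = f (S' ∪ {r}) - f S' := rfl
      rw [c1, c2]
      linarith

lemma adap_le_alg_add_alg (f : Finset T → ℝ)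
    (hmono : ∀ A B : Finset T, A ⊆ B → f A ≤ f B)
    (hsub : ∀ A B : Finset T, f (A ∪ B) + f (A ∩ B) ≤ f A + f B) :
    ∀ 𝒯 : DTree T, 𝒯.valid → ∀ X Y : Finset T, Y ⊆ X →
      adap 𝒯 (contract f X) ≤ alg 𝒯 (contract f X) + alg 𝒯 (contract f Y) := by
  intro 𝒯
  induction 𝒯 with
  | leaf => intro _ X Y _; simp [adap, alg]
  | node μ c ih =>
      rintro ⟨hpos, hsum, hc⟩ X Y hYX
      simp only [adap, alg, contract_contract]
      have key : ∀ i r : T,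
          contract f X {i} + adap (c i) (contract f (X ∪ {i})) ≤
            (contract f X {r} + alg (c i) (contract f (X ∪ {r}))) +
            (contract f Y {i} + alg (c i) (contract f (Y ∪ {r}))) := by
        intro i r
        have h1 := adap_contract_le f hmono (c i) (hc i) (X ∪ {i}) (X ∪ {i} ∪ {r})
          subset_union_left
        have h2 := ih i (hc i) (X ∪ {i} ∪ {r}) (Y ∪ {r})
          (union_subset_union (hYX.trans subset_union_left) Subset.rfl)
        have h3 := alg_contract_anti f hmono hsub (c i) (hc i) (X ∪ {r}) (X ∪ {i} ∪ {r})
          (union_subset_union subset_union_left Subset.rfl)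
        have h4 := marg_le f hmono hsub (hYX.trans subset_union_left : Y ⊆ X ∪ {r})
          ({i} : Finset T)
        rw [union_right_comm X {r} {i}] at h4
        have c1 : contract f X {i} = f (X ∪ {i}) - f X := rfl
        have c2 : contract f X {r} = f (X ∪ {r}) - f X := rfl
        have c3 : contract f Y {i} = f (Y ∪ {i}) - f Y := rfl
        rw [c1, c2, c3]
        linarith
      have hdiag : ∀ x : T → ℝ, (∑ i, μ i * x i) = ∑ i, ∑ r, μ i * μ r * x i := by
        intro x
        refine Finset.sum_congr rfl fun i _ => ?_
        rw [← Finset.sum_mul, ← Finset.mul_sum, hsum, mul_one]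
      have hswapY : (∑ i, ∑ r, μ i * μ r * contract f Y {i}) =
          ∑ i, ∑ r, μ i * μ r * contract f Y {r} := by
        have e1 : ∀ i : T, (∑ r, μ i * μ r * contract f Y {i}) = μ i * contract f Y {i} :=
          fun i => by rw [← Finset.sum_mul, ← Finset.mul_sum, hsum, mul_one]
        have e2 : (∑ i, ∑ r, μ i * μ r * contract f Y {r}) = ∑ r, μ r * contract f Y {r} := by
          rw [Finset.sum_comm]
          refine Finset.sum_congr rfl fun r _ => ?_
          rw [← Finset.sum_mul, ← Finset.sum_mul, hsum, one_mul]
        rw [e2]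
        exact Finset.sum_congr rfl fun i _ => e1 i
      calc (∑ i, μ i * (contract f X {i} + adap (c i) (contract f (X ∪ {i}))))
          = ∑ i, ∑ r, μ i * μ r * (contract f X {i} + adap (c i) (contract f (X ∪ {i}))) :=
            hdiag _
        _ ≤ ∑ i, ∑ r, μ i * μ r *
              ((contract f X {r} + alg (c i) (contract f (X ∪ {r}))) +
               (contract f Y {i} + alg (c i) (contract f (Y ∪ {r})))) := by
            refine Finset.sum_le_sum fun i _ => Finset.sum_le_sum fun r _ => ?_
            exact mul_le_mul_of_nonneg_left (key i r) (mul_nonneg (hpos i) (hpos r))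
        _ = (∑ i, ∑ r, μ i * μ r * (contract f X {r} + alg (c i) (contract f (X ∪ {r})))) +
            ((∑ i, ∑ r, μ i * μ r * contract f Y {i}) +
             (∑ i, ∑ r, μ i * μ r * alg (c i) (contract f (Y ∪ {r})))) := by
            simp only [mul_add, Finset.sum_add_distrib]
        _ = (∑ i, ∑ r, μ i * μ r * (contract f X {r} + alg (c i) (contract f (X ∪ {r})))) +
            ((∑ i, ∑ r, μ i * μ r * contract f Y {r}) +
             (∑ i, ∑ r, μ i * μ r * alg (c i) (contract f (Y ∪ {r})))) := by
            rw [hswapY]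
        _ = (∑ i, ∑ r, μ i * μ r * (contract f X {r} + alg (c i) (contract f (X ∪ {r})))) +
            (∑ i, ∑ r, μ i * μ r * (contract f Y {r} + alg (c i) (contract f (Y ∪ {r})))) := by
            simp only [mul_add, Finset.sum_add_distrib]

end Aux

/-- Upper bound of Theorem 3.1: for any monotone submodular `f` with `f ∅ = 0`
and any decision tree, `adap(𝒯, f) ≤ 2 · alg(𝒯, f)`. -/
theorem submodular_adaptivity_gap_le_two {T : Type*} [Fintype T] [DecidableEq T]
    (𝒯 : DTree T) (h𝒯 : 𝒯.valid) (f : Finset T → ℝ)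
    (hmono : ∀ A B : Finset T, A ⊆ B → f A ≤ f B)
    (hsubmod : ∀ A B : Finset T, f (A ∪ B) + f (A ∩ B) ≤ f A + f B)
    (hempty : f ∅ = 0) :
    adap 𝒯 f ≤ 2 * alg 𝒯 f := by
  have hf : contract f ∅ = f := funext fun A => by simp [contract, hempty]
  have h := adap_le_alg_add_alg f hmono hsubmod 𝒯 h𝒯 ∅ ∅ Subset.rfl
  rw [hf] at h
  linarith
end

section
/- Let T be a finite type, let k be a positive natural number, and let F be a downward-closed k-extendible system of finsets of T with unweighted rank function f. Let A ⊆ B be finsets of T and let G ⊆ B be a member of F that is maximal among subsets of B (i.e., G ∈ F, G ⊆ B, and G ∪ {e} ∉ F for every e ∈ B \ G). Then f(A) ≤ k · |G|; equivalently, every S ⊆ A with S ∈ F satisfies |S| ≤ k · |G|. (Lemma 4.2: any greedily constructed maximal independent subset of B is a k-approximation to the largest independent subset of any A ⊆ B.) -/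
/-- Downward-closed family of finsets: contains `∅` and all subsets of members. -/
def DownwardClosed {T : Type*} (F : Finset (Finset T)) : Prop :=
  ∅ ∈ F ∧ ∀ B ∈ F, ∀ A ⊆ B, A ∈ F

/-- `k`-extendible system. -/
def KExtendible {T : Type*} [DecidableEq T] (k : ℕ) (F : Finset (Finset T)) : Prop :=
  ∀ A B : Finset T, A ⊆ B → B ∈ F → ∀ e : T, A ∪ {e} ∈ F →
    ∃ Z ⊆ B \ A, Z.card ≤ k ∧ (B \ Z) ∪ {e} ∈ F

/-- Unweighted rank function `f(A) = max_{B ∈ F} |A ∩ B|` (as a natural number). -/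
def urankNat {T : Type*} [DecidableEq T] (F : Finset (Finset T)) (A : Finset T) : ℕ :=
  F.sup fun B => (A ∩ B).card

/-- Lemma 4.2: if `G ∈ F` is a maximal independent subset of `B` and `A ⊆ B`,
then `f(A) ≤ k · |G|`; equivalently, every independent `S ⊆ A` has `|S| ≤ k · |G|`. -/
theorem greedy_k_approximation {T : Type*} [Fintype T] [DecidableEq T]
    (k : ℕ) (hk : 0 < k) (F : Finset (Finset T))
    (hdc : DownwardClosed F) (hext : KExtendible k F)
    (A B G : Finset T) (hAB : A ⊆ B)
    (hG : G ∈ F) (hGB : G ⊆ B)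
    (hmax : ∀ e ∈ B \ G, G ∪ {e} ∉ F) :
    urankNat F A ≤ k * G.card ∧ ∀ S ⊆ A, S ∈ F → S.card ≤ k * G.card := by
  have key : ∀ S ⊆ A, S ∈ F → S.card ≤ k * G.card := by
    intro S hSA hS
    -- auxiliary charging construction
    have aux : ∀ P : Finset T, P ⊆ G \ S →
        ∃ C ∈ F, (S ∩ G) ∪ P ⊆ C ∧ C ⊆ S ∪ P ∧ (S \ C).card ≤ k * P.card := by
      intro P
      induction P using Finset.induction_on with
      | empty =>
        intro _
        exact ⟨S, hS, by simp [Finset.union_subset, Finset.inter_subset_left],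
          by simp, by simp⟩
      | @insert g P' hg ih =>
        intro hins
        have hP' : P' ⊆ G \ S := fun x hx => hins (Finset.mem_insert_of_mem hx)
        have hgGS : g ∈ G \ S := hins (Finset.mem_insert_self g P')
        obtain ⟨C', hC'F, hAC', hC'S, hcard⟩ := ih hP'
        -- apply extendibility with A = (S ∩ G) ∪ P', B = C', e = g
        have hAsubG : (S ∩ G) ∪ P' ⊆ G := by
          apply Finset.union_subset Finset.inter_subset_right
          exact fun x hx => (Finset.mem_sdiff.mp (hP' hx)).1
        have hAe : ((S ∩ G) ∪ P') ∪ {g} ∈ F := by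
          apply hdc.2 G hG
          apply Finset.union_subset hAsubG
          simpa using (Finset.mem_sdiff.mp hgGS).1
        obtain ⟨Z, hZ, hZcard, hnew⟩ := hext ((S ∩ G) ∪ P') C' hAC' hC'F g hAe
        refine ⟨(C' \ Z) ∪ {g}, hnew, ?_, ?_, ?_⟩
        · intro x hx
          rcases Finset.mem_union.mp hx with hx | hx
          · apply Finset.mem_union_left
            apply Finset.mem_sdiff.mpr
            refine ⟨hAC' (Finset.mem_union_left _ hx), fun hxZ => ?_⟩
            exact (Finset.mem_sdiff.mp (hZ hxZ)).2 (Finset.mem_union_left _ hx)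
          · rcases Finset.mem_insert.mp hx with rfl | hx
            · exact Finset.mem_union_right _ (Finset.mem_singleton_self _)
            · apply Finset.mem_union_left
              apply Finset.mem_sdiff.mpr
              refine ⟨hAC' (Finset.mem_union_right _ hx), fun hxZ => ?_⟩
              exact (Finset.mem_sdiff.mp (hZ hxZ)).2 (Finset.mem_union_right _ hx)
        · intro x hx
          rcases Finset.mem_union.mp hx with hx | hx
          · rcases Finset.mem_union.mp (hC'S (Finset.mem_sdiff.mp hx).1) with h | h
            · exact Finset.mem_union_left _ h
            · exact Finset.mem_union_right _ (Finset.mem_insert_of_mem h)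
          · rw [Finset.mem_singleton] at hx
            exact Finset.mem_union_right _ (hx ▸ Finset.mem_insert_self g P')
        · have hsub : S \ ((C' \ Z) ∪ {g}) ⊆ (S \ C') ∪ Z := by
            intro x hx
            obtain ⟨hxS, hxC⟩ := Finset.mem_sdiff.mp hx
            by_cases hxC' : x ∈ C'
            · refine Finset.mem_union_right _ ?_
              by_contra hxZ
              exact hxC (Finset.mem_union_left _ (Finset.mem_sdiff.mpr ⟨hxC', hxZ⟩))
            · exact Finset.mem_union_left _ (Finset.mem_sdiff.mpr ⟨hxS, hxC'⟩)
          calc (S \ ((C' \ Z) ∪ {g})).card ≤ ((S \ C') ∪ Z).card :=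
                Finset.card_le_card hsub
            _ ≤ (S \ C').card + Z.card := Finset.card_union_le _ _
            _ ≤ k * P'.card + k := Nat.add_le_add hcard hZcard
            _ = k * (insert g P').card := by
                rw [Finset.card_insert_of_notMem hg, Nat.mul_add, Nat.mul_one]
    obtain ⟨C, hCF, hGC, hCS, hcard⟩ := aux (G \ S) (le_refl _)
    have hGC' : G ⊆ C := by
      intro x hx
      by_cases hxS : x ∈ S
      · exact hGC (Finset.mem_union_left _ (Finset.mem_inter.mpr ⟨hxS, hx⟩))
      · exact hGC (Finset.mem_union_right _ (Finset.mem_sdiff.mpr ⟨hx, hxS⟩))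
    have hCB : C ⊆ B := by
      intro x hx
      rcases Finset.mem_union.mp (hCS hx) with h | h
      · exact hAB (hSA h)
      · exact hGB (Finset.mem_sdiff.mp h).1
    have hCeqG : C = G := by
      apply Finset.Subset.antisymm _ hGC'
      intro x hx
      by_contra hxG
      apply hmax x (Finset.mem_sdiff.mpr ⟨hCB hx, hxG⟩)
      apply hdc.2 C hCF
      apply Finset.union_subset hGC'
      simpa using hx
    rw [hCeqG] at hcard
    have h1 : S.card = (S \ G).card + (S ∩ G).card := (Finset.card_sdiff_add_card_inter S G).symm
    have h2 : (S ∩ G).card ≤ (G \ S).card + (S ∩ G).card := Nat.le_add_left _ _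
    have h3 : (G \ S).card + (G ∩ S).card = G.card := Finset.card_sdiff_add_card_inter G S
    calc S.card = (S \ G).card + (S ∩ G).card := h1
      _ ≤ k * (G \ S).card + (S ∩ G).card := Nat.add_le_add_right hcard _
      _ ≤ k * (G \ S).card + k * (G ∩ S).card := by
          rw [Finset.inter_comm]
          exact Nat.add_le_add_left (Nat.le_mul_of_pos_left _ hk) _
      _ = k * G.card := by rw [← Nat.mul_add, h3]
  refine ⟨?_, key⟩
  apply Finset.sup_le
  intro W hW
  exact key (A ∩ W) Finset.inter_subset_left (hdc.2 W hW _ Finset.inter_subset_right)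
end

section
/- Let T be a finite type, let k be a natural number, and let F be a downward-closed k-extendible system of finsets of T. Then for every A ⊆ B with B ∈ F and every finset E ⊆ T with A ∪ E ∈ F, there exists a set Z ⊆ B \ A such that |Z| ≤ k · |E| and (B \ Z) ∪ E ∈ F. (Fact A.1: the k-extendible exchange property extends from single elements to sets.) -/
/-- Fact A.1: the `k`-extendible exchange property extends from single
elements to sets: if `A ⊆ B ∈ F` and `A ∪ E ∈ F`, then some `Z ⊆ B \ A` with
`|Z| ≤ k · |E|` has `(B \ Z) ∪ E ∈ F`. -/
theorem kExtendible_property_for_sets {T : Type*} [Fintype T] [DecidableEq T]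
    (k : ℕ) (F : Finset (Finset T))
    (hdc : DownwardClosed F) (hext : KExtendible k F)
    (A B E : Finset T) (hAB : A ⊆ B) (hB : B ∈ F) (hAE : A ∪ E ∈ F) :
    ∃ Z ⊆ B \ A, Z.card ≤ k * E.card ∧ (B \ Z) ∪ E ∈ F := by
  induction E using Finset.induction generalizing A B with
  | empty =>
    refine ⟨∅, by simp, by simp, ?_⟩
    simpa using hB
  | @insert e E' he IH =>
    -- first exchange the single element e
    have hAe : A ∪ {e} ∈ F := by
      refine hdc.2 _ hAE _ ?_
      intro x hx
      simp only [Finset.mem_union, Finset.mem_singleton, Finset.mem_insert] at hx ⊢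
      tauto
    obtain ⟨Z₀, hZ₀sub, hZ₀card, hB'⟩ := hext A B hAB hB e hAe
    set B' := (B \ Z₀) ∪ {e} with hB'def
    have hA'B' : A ∪ {e} ⊆ B' := by
      intro x hx
      simp only [Finset.mem_union, Finset.mem_singleton, Finset.mem_sdiff, hB'def] at hx ⊢
      rcases hx with hx | hx
      · left; exact ⟨hAB hx, fun hxZ => by
          have := hZ₀sub hxZ
          simp only [Finset.mem_sdiff] at this
          exact this.2 hx⟩
      · right; exact hx
    have hA'E' : (A ∪ {e}) ∪ E' ∈ F := by
      have : (A ∪ {e}) ∪ E' = A ∪ insert e E' := by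
        ext x; simp [Finset.mem_insert]
      rwa [this]
    obtain ⟨Z₁, hZ₁sub, hZ₁card, hfin⟩ := IH (A ∪ {e}) B' hA'B' hB' hA'E'
    have heZ₁ : e ∉ Z₁ := fun h => by
      have := hZ₁sub h
      simp [Finset.mem_sdiff] at this
    have hZ₁BA : Z₁ ⊆ B \ A := by
      intro x hx
      have hx' := hZ₁sub hx
      simp only [Finset.mem_sdiff, Finset.mem_union, Finset.mem_singleton, hB'def] at hx'
      obtain ⟨hx1, hx2⟩ := hx'
      push_neg at hx2
      rcases hx1 with ⟨hxB, _⟩ | hxe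
      · exact Finset.mem_sdiff.mpr ⟨hxB, hx2.1⟩
      · exact absurd hxe hx2.2
    refine ⟨Z₀ ∪ Z₁, Finset.union_subset hZ₀sub hZ₁BA, ?_, ?_⟩
    · calc (Z₀ ∪ Z₁).card ≤ Z₀.card + Z₁.card := Finset.card_union_le _ _
        _ ≤ k + k * E'.card := Nat.add_le_add hZ₀card hZ₁card
        _ = k * (insert e E').card := by
            rw [Finset.card_insert_of_notMem he]; ring
    · have key : (B' \ Z₁) ∪ E' = (B \ (Z₀ ∪ Z₁)) ∪ insert e E' := by
        ext x
        simp only [Finset.mem_union, Finset.mem_sdiff, Finset.mem_singleton,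
          Finset.mem_insert, hB'def]
        constructor
        · rintro (⟨hx1 | hx1, hx2⟩ | hx)
          · exact Or.inl ⟨hx1.1, fun h => h.elim hx1.2 hx2⟩
          · subst hx1; exact Or.inr (Or.inl rfl)
          · exact Or.inr (Or.inr hx)
        · rintro (⟨hxB, hxZ⟩ | hx | hx)
          · exact Or.inl ⟨Or.inl ⟨hxB, fun h => hxZ (Or.inl h)⟩,
              fun h => hxZ (Or.inr h)⟩
          · subst hx; exact Or.inl ⟨Or.inr rfl, heZ₁⟩
          · exact Or.inr hx
      rwa [key] at hfin
end

section
/- Let T be a finite type, let F be a downward-closed family of finsets of T, let w : T → ℝ be strictly positive weights, and let f be the weighted rank function of F with weights w. For each integer j let f_j be the unweighted class rank function f_j(A) := max_{B ∈ F} |{t ∈ A ∩ B : 2^{j−1} < w(t) ≤ 2^j}|. Then for every finset A of T, f(A) ≤ Σ_j 2^j · f_j(A), where the sum ranges over the finitely many integers j for which some t ∈ T satisfies 2^{j−1} < w(t) ≤ 2^j. (The class-decomposition inequality used to reduce weighted to unweighted rank functions.) -/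
/-- Weighted rank function `f(A) = max_{B ∈ F} Σ_{t ∈ A ∩ B} w(t)`
(for a nonempty family; any downward-closed family is nonempty). -/
noncomputable def wrank {T : Type*} [DecidableEq T] (F : Finset (Finset T))
    (w : T → ℝ) (A : Finset T) : ℝ :=
  if h : F.Nonempty then F.sup' h (fun B => ∑ t ∈ A ∩ B, w t) else 0

open Classical in
/-- Unweighted class rank function
`f_j(A) = max_{B ∈ F} |{t ∈ A ∩ B : 2^{j−1} < w(t) ≤ 2^j}|` (as a real number). -/
noncomputable def classRank {T : Type*} [DecidableEq T] (F : Finset (Finset T))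
    (w : T → ℝ) (j : ℤ) (A : Finset T) : ℝ :=
  ((F.sup fun B =>
      ((A ∩ B).filter fun t => (2:ℝ)^(j-1) < w t ∧ w t ≤ (2:ℝ)^j).card : ℕ) : ℝ)

/-- The class-decomposition inequality: the weighted rank is at most the sum of
`2^j` times the unweighted class ranks, over the occupied weight classes. -/
theorem weighted_rank_le_sum_class_ranks {T : Type*} [Fintype T] [DecidableEq T]
    (F : Finset (Finset T)) (hdc : DownwardClosed F)
    (w : T → ℝ) (hw : ∀ t, 0 < w t)
    (J : Finset ℤ)
    (hJ : ∀ j : ℤ, j ∈ J ↔ ∃ t : T, (2:ℝ)^(j-1) < w t ∧ w t ≤ (2:ℝ)^j)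
    (A : Finset T) :
    wrank F w A ≤ ∑ j ∈ J, (2:ℝ)^j * classRank F w j A := by
  classical
  have hFne : F.Nonempty := ⟨∅, hdc.1⟩
  rw [wrank, dif_pos hFne]
  apply Finset.sup'_le
  intro B hB
  have hcls : ∀ t : T, ∃ j : ℤ, (2:ℝ)^(j-1) < w t ∧ w t ≤ (2:ℝ)^j := by
    intro t
    obtain ⟨n, hn⟩ := exists_mem_Ioc_zpow (hw t) one_lt_two
    exact ⟨n+1, by simpa using hn.1, by simpa using hn.2⟩
  choose c hc1 hc2 using hcls
  have huniq : ∀ t (j : ℤ), ((2:ℝ)^(j-1) < w t ∧ w t ≤ (2:ℝ)^j) ↔ c t = j := by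
    intro t j
    constructor
    · rintro ⟨h1, h2⟩
      have l1 : (2:ℝ)^(j-1) < (2:ℝ)^(c t) := h1.trans_le (hc2 t)
      have l2 : (2:ℝ)^(c t - 1) < (2:ℝ)^j := (hc1 t).trans_le h2
      have g1 := (zpow_lt_zpow_iff_right₀ (one_lt_two (α := ℝ))).mp l1
      have g2 := (zpow_lt_zpow_iff_right₀ (one_lt_two (α := ℝ))).mp l2
      omega
    · rintro rfl; exact ⟨hc1 t, hc2 t⟩
  have hmaps : ∀ t ∈ A ∩ B, c t ∈ J := fun t _ => (hJ (c t)).2 ⟨t, hc1 t, hc2 t⟩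
  calc ∑ t ∈ A ∩ B, w t
      = ∑ j ∈ J, ∑ t ∈ (A ∩ B).filter (fun t => c t = j), w t :=
        (Finset.sum_fiberwise_of_maps_to hmaps _).symm
    _ ≤ ∑ j ∈ J, (2:ℝ)^j * classRank F w j A := by
        apply Finset.sum_le_sum
        intro j hj
        have hfeq : (A ∩ B).filter (fun t => c t = j)
            = (A ∩ B).filter (fun t => (2:ℝ)^(j-1) < w t ∧ w t ≤ (2:ℝ)^j) := by
          apply Finset.filter_congr
          intro t ht
          simp [← huniq t j]
        rw [hfeq]
        have hcard : ((((A ∩ B).filter fun t =>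
              (2:ℝ)^(j-1) < w t ∧ w t ≤ (2:ℝ)^j).card : ℕ) : ℝ)
            ≤ classRank F w j A := by
          unfold classRank
          have : (((A ∩ B).filter fun t => (2:ℝ)^(j-1) < w t ∧ w t ≤ (2:ℝ)^j).card : ℕ)
              ≤ F.sup fun B => ((A ∩ B).filter fun t =>
                  (2:ℝ)^(j-1) < w t ∧ w t ≤ (2:ℝ)^j).card := by
            have := Finset.le_sup (f := fun B => ((A ∩ B).filter fun t =>
              (2:ℝ)^(j-1) < w t ∧ w t ≤ (2:ℝ)^j).card) hB
            convert this using 2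
          exact_mod_cast this
        calc ∑ t ∈ (A ∩ B).filter (fun t => (2:ℝ)^(j-1) < w t ∧ w t ≤ (2:ℝ)^j), w t
            ≤ ∑ t ∈ (A ∩ B).filter (fun t => (2:ℝ)^(j-1) < w t ∧ w t ≤ (2:ℝ)^j), (2:ℝ)^j :=
              Finset.sum_le_sum fun t ht => ((Finset.mem_filter.mp ht).2).2
          _ = (((A ∩ B).filter (fun t => (2:ℝ)^(j-1) < w t ∧ w t ≤ (2:ℝ)^j)).card : ℝ) * (2:ℝ)^j := by
              rw [Finset.sum_const, nsmul_eq_mul]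
          _ ≤ (2:ℝ)^j * classRank F w j A := by
              rw [mul_comm]
              exact mul_le_mul_of_nonneg_left hcard (by positivity)
end

section
/- Let k ≥ 2 be a natural number, let n be a natural number, and let w, a, a' : ℕ → ℝ satisfy, for all i < n: w(i) ≥ 0, a(i) ≥ 0, a'(i) ≥ 0, a'(i) ≥ a(i) − k · Σ_{i' < i} a'(i'), and w(i+1) ≤ w(i) / k² whenever i + 1 < n. Then Σ_{i < n} w(i) · a'(i) ≥ (1/2) · Σ_{i < n} w(i) · a(i). (The arithmetic core of Claim 4.5: a greedy-optimal selection over geometrically separated weight classes loses at most a factor of 2.) -/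
lemma tail_sum_le (k n : ℕ) (hk : 2 ≤ k) (w : ℕ → ℝ)
    (hw : ∀ i < n, 0 ≤ w i)
    (hsep : ∀ i, i + 1 < n → w (i + 1) ≤ w i / (k : ℝ)^2) :
    ∀ d m, n - m = d → m < n →
      ∑ i ∈ Finset.Ico (m + 1) n, w i ≤ w m / ((k : ℝ)^2 - 1) := by
  have hk2 : (2:ℝ) ≤ (k:ℝ) := by exact_mod_cast hk
  have hkpos : (0:ℝ) < (k : ℝ)^2 - 1 := by nlinarith
  have hk2pos : (0:ℝ) < (k : ℝ)^2 := by nlinarith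
  intro d
  induction' d using Nat.strong_induction_on with d ih
  intro m hd hm
  by_cases h : m + 1 < n
  · have step := hsep m h
    have hrec := ih (n - (m+1)) (by omega) (m+1) rfl h
    have hsplit : ∑ i ∈ Finset.Ico (m + 1) n, w i
        = w (m+1) + ∑ i ∈ Finset.Ico (m + 2) n, w i :=
      Finset.sum_eq_sum_Ico_succ_bot h w
    rw [hsplit, le_div_iff₀ hkpos]
    have h1 : (∑ i ∈ Finset.Ico (m + 2) n, w i) * ((k:ℝ)^2 - 1) ≤ w (m+1) :=
      (le_div_iff₀ hkpos).mp hrec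
    have h2 : w (m+1) * (k:ℝ)^2 ≤ w m := (le_div_iff₀ hk2pos).mp step
    nlinarith
  · have : Finset.Ico (m + 1) n = ∅ := Finset.Ico_eq_empty (by omega)
    rw [this, Finset.sum_empty]
    exact div_nonneg (hw m hm) hkpos.le

/-- The arithmetic core of Claim 4.5: if each `a'(i)` loses at most
`k · Σ_{i' < i} a'(i')` compared to `a(i)`, and consecutive weights are
separated by a factor `k²`, then the greedy-optimal selection loses at most a
factor of `2`. -/
theorem greedy_optimal_arith (k n : ℕ) (hk : 2 ≤ k) (w a a' : ℕ → ℝ)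
    (hw : ∀ i < n, 0 ≤ w i)
    (ha : ∀ i < n, 0 ≤ a i)
    (ha' : ∀ i < n, 0 ≤ a' i)
    (hgreedy : ∀ i < n, a' i ≥ a i - (k : ℝ) * ∑ i' ∈ Finset.range i, a' i')
    (hsep : ∀ i, i + 1 < n → w (i + 1) ≤ w i / (k : ℝ)^2) :
    ∑ i ∈ Finset.range n, w i * a' i ≥ (1/2) * ∑ i ∈ Finset.range n, w i * a i := by
  have hk2 : (2:ℝ) ≤ (k:ℝ) := by exact_mod_cast hk
  have hkpos : (0:ℝ) < (k : ℝ)^2 - 1 := by nlinarith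
  -- key bound on tails
  have key : ∀ i' < n, (k:ℝ) * ∑ i ∈ Finset.Ico (i'+1) n, w i ≤ w i' := by
    intro i' hi'
    have ht := tail_sum_le k n hk w hw hsep (n - i') i' rfl hi'
    have hwi : 0 ≤ w i' := hw i' hi'
    have : (k:ℝ) * ∑ i ∈ Finset.Ico (i'+1) n, w i ≤ (k:ℝ) * (w i' / ((k:ℝ)^2 - 1)) := by
      apply mul_le_mul_of_nonneg_left ht (by positivity)
    refine this.trans ?_
    rw [mul_div_assoc']
    rw [div_le_iff₀ hkpos]
    nlinarith [mul_nonneg hwi (by nlinarith : (0:ℝ) ≤ (k:ℝ)^2 - (k:ℝ) - 1)]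
  -- step 1: bound ∑ w a
  have step1 : ∑ i ∈ Finset.range n, w i * a i ≤
      ∑ i ∈ Finset.range n, w i * a' i +
      ∑ i ∈ Finset.range n, ∑ i' ∈ Finset.range i, (k:ℝ) * w i * a' i' := by
    rw [← Finset.sum_add_distrib]
    apply Finset.sum_le_sum
    intro i hi
    rw [Finset.mem_range] at hi
    have hg := hgreedy i hi
    have hwi := hw i hi
    have : a i ≤ a' i + (k:ℝ) * ∑ i' ∈ Finset.range i, a' i' := by linarith
    calc w i * a i ≤ w i * (a' i + (k:ℝ) * ∑ i' ∈ Finset.range i, a' i') :=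
          mul_le_mul_of_nonneg_left this hwi
      _ = w i * a' i + ∑ i' ∈ Finset.range i, (k:ℝ) * w i * a' i' := by
          rw [mul_add, Finset.mul_sum, Finset.mul_sum]
          congr 1
          exact Finset.sum_congr rfl fun x _ => by ring
  -- step 2: swap the double sum
  have step2 : ∑ i ∈ Finset.range n, ∑ i' ∈ Finset.range i, (k:ℝ) * w i * a' i'
      = ∑ i' ∈ Finset.range n, ∑ i ∈ Finset.Ico (i'+1) n, (k:ℝ) * w i * a' i' := by
    rw [← Nat.Ico_zero_eq_range, Finset.sum_Ico_Ico_comm' 0 n (fun x y => (k:ℝ) * w y * a' x)]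
    simp only [Nat.Ico_zero_eq_range]
  -- step 3: bound the swapped sum
  have step3 : ∑ i' ∈ Finset.range n, ∑ i ∈ Finset.Ico (i'+1) n, (k:ℝ) * w i * a' i'
      ≤ ∑ i' ∈ Finset.range n, w i' * a' i' := by
    apply Finset.sum_le_sum
    intro i' hi'
    rw [Finset.mem_range] at hi'
    have : ∑ i ∈ Finset.Ico (i'+1) n, (k:ℝ) * w i * a' i'
        = ((k:ℝ) * ∑ i ∈ Finset.Ico (i'+1) n, w i) * a' i' := by
      rw [Finset.mul_sum, Finset.sum_mul]
    rw [this]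
    exact mul_le_mul_of_nonneg_right (key i' hi') (ha' i' hi')
  linarith
end

section
/- Let p be a prime number, let d_u, d_v be natural numbers with 1 ≤ d_u ≤ p and 1 ≤ d_v ≤ p, and let L_u, L_v : ℕ → ZMod p. Then the following are equivalent: (i) there exist a natural number i with 1 ≤ i ≤ min(d_u, d_v) and j ∈ ZMod p such that L_u(i)·j + d_u = L_v(i)·j + d_v in ZMod p; (ii) d_u = d_v, or there exists a natural number i with 1 ≤ i ≤ min(d_u, d_v) such that L_u(i) ≠ L_v(i). (The characterization in Section 4.3 showing that two tree edges conflict in some partition matroid M_{i,j} exactly when neither endpoint node is an ancestor of the other.) -/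
lemma cast_inj_of_le (p : ℕ) (hp : p.Prime) (du dv : ℕ)
    (hdu1 : 1 ≤ du) (hdup : du ≤ p) (hdv1 : 1 ≤ dv) (hdvp : dv ≤ p)
    (h : (du : ZMod p) = (dv : ZMod p)) : du = dv := by
  have hmod : du % p = dv % p := (ZMod.natCast_eq_natCast_iff' du dv p).mp h
  rcases lt_or_eq_of_le hdup with h1 | h1 <;> rcases lt_or_eq_of_le hdvp with h2 | h2
  · rwa [Nat.mod_eq_of_lt h1, Nat.mod_eq_of_lt h2] at hmod
  · rw [Nat.mod_eq_of_lt h1, h2, Nat.mod_self] at hmod; omega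
  · rw [Nat.mod_eq_of_lt h2, h1, Nat.mod_self] at hmod; omega
  · omega

/-- Characterization of conflicts in the partition matroids `M_{i,j}` of
Section 4.3: two edges at depths `d_u, d_v` with label lists `L_u, L_v`
conflict in some matroid iff `d_u = d_v` or the label lists differ at some
coordinate `i ≤ min(d_u, d_v)`. -/
theorem tree_edges_conflict_iff (p : ℕ) (hp : p.Prime)
    (du dv : ℕ) (hdu1 : 1 ≤ du) (hdup : du ≤ p) (hdv1 : 1 ≤ dv) (hdvp : dv ≤ p)
    (Lu Lv : ℕ → ZMod p) :
    (∃ i : ℕ, 1 ≤ i ∧ i ≤ min du dv ∧ ∃ j : ZMod p,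
        Lu i * j + (du : ZMod p) = Lv i * j + (dv : ZMod p)) ↔
    (du = dv ∨ ∃ i : ℕ, 1 ≤ i ∧ i ≤ min du dv ∧ Lu i ≠ Lv i) := by
  haveI := Fact.mk hp
  constructor
  · rintro ⟨i, hi1, hi2, j, hj⟩
    by_cases hL : Lu i = Lv i
    · left
      rw [hL] at hj; have hj := add_left_cancel hj
      exact cast_inj_of_le p hp du dv hdu1 hdup hdv1 hdvp hj
    · right; exact ⟨i, hi1, hi2, hL⟩
  · rintro (h | ⟨i, hi1, hi2, hL⟩)
    · exact ⟨1, le_refl 1, by omega, 0, by rw [h]; ring⟩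
    · refine ⟨i, hi1, hi2, ((dv : ZMod p) - du) / (Lu i - Lv i), ?_⟩
      have hne : Lu i - Lv i ≠ 0 := sub_ne_zero.mpr hL
      field_simp
      ring
end

section
/- Let ε be a real number with 0 < ε < 1, let D be a natural number, and let g : ℕ → ℝ satisfy: g(m) = 0 for all m > D; g(D) = ε·(1−ε)^D; and for every k < D, g(k) = max_{0 ≤ i ≤ D−k} [ (1−ε)^k·(1 − (1−ε)^{i+1}) + g(k+i+1) ]. Then g(k) < (1−ε)^k for every k ≤ D; in particular g(0) < 1. (Appendix A: the optimal non-adaptive value in the finite lower-bound example is less than 1.) -/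
/-- Appendix A: the optimal non-adaptive value in the finite lower-bound
example satisfies `g(k) < (1−ε)^k` for all `k ≤ D`; in particular `g(0) < 1`. -/
theorem nonadaptive_value_finite_example (ε : ℝ) (h0 : 0 < ε) (h1 : ε < 1)
    (D : ℕ) (g : ℕ → ℝ)
    (hg_zero : ∀ m, D < m → g m = 0)
    (hgD : g D = ε * (1 - ε)^D)
    (hg : ∀ k < D, g k = (Finset.range (D - k + 1)).sup'
        (Finset.nonempty_range_iff.mpr (by omega))
        (fun i => (1 - ε)^k * (1 - (1 - ε)^(i+1)) + g (k + i + 1))) :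
    ∀ k ≤ D, g k < (1 - ε)^k := by
  have main : ∀ n, ∀ k ≤ D, D - k = n → g k < (1 - ε)^k := by
    intro n
    induction n using Nat.strong_induction_on with
    | _ n ih =>
    intro k hk hn
    have h1e : (0:ℝ) < 1 - ε := by linarith
    rcases eq_or_lt_of_le hk with heq | hlt
    · subst heq; rw [hgD]
      nlinarith [pow_pos h1e k]
    · rw [hg k hlt]
      rw [Finset.sup'_lt_iff]
      intro i hi
      simp only [Finset.mem_range] at hi
      by_cases hc : k + i + 1 ≤ D
      · have hind := ih (D - (k + i + 1)) (by omega) (k + i + 1) hc (by omega)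
        have key : (1-ε)^(k+i+1) = (1-ε)^k * (1-ε)^(i+1) := by
          rw [← pow_add]; ring_nf
        nlinarith [pow_pos h1e k, pow_pos h1e (i+1)]
      · rw [hg_zero _ (by omega)]
        nlinarith [pow_pos h1e k, pow_pos h1e (i+1)]
  exact fun k hk => main (D - k) k hk rfl
end

section
/- There exists ε₀ with 0 < ε₀ < 1/2 such that for every real ε with 0 < ε < ε₀ the following holds. Let D be the least natural number with (1−ε)^D < ε², and let a : ℕ → ℝ satisfy: a(m) = 0 for all m > D, and for every k ≤ D, a(k) = Σ_{i=0}^{D−k} (1−ε)^i·ε·( (1−ε)^k + a(k+i+1) ). Then a(k) > ((4−6ε)/(2−ε))·(1−ε)^k − 8ε for every k ≤ D. (Appendix A: the adaptive strategy's value in the finite lower-bound example.) -/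
lemma lem_geom (x : ℝ) (n : ℕ) :
    ∑ i ∈ Finset.range (n+1), x^i * (1-x) = 1 - x^(n+1) := by
  induction n with
  | zero => simp
  | succ n ih => rw [Finset.sum_range_succ, ih]; ring

lemma lem_lin (q : ℝ) (n : ℕ) :
    (1-q)^2 * ∑ i ∈ Finset.range (n+1), q^i * ((n-i : ℕ):ℝ)
      = (1-q)*n - q + q^(n+1) := by
  induction n with
  | zero => simp
  | succ n ih =>
    have h1 : ∑ i ∈ Finset.range (n+2), q^i * ((n+1-i : ℕ):ℝ)
        = (∑ i ∈ Finset.range (n+1), q^i * ((n-i : ℕ):ℝ))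
          + ∑ i ∈ Finset.range (n+1), q^i := by
      rw [Finset.sum_range_succ]
      simp only [Nat.sub_self, Nat.cast_zero, mul_zero, add_zero]
      rw [← Finset.sum_add_distrib]
      apply Finset.sum_congr rfl
      intro i hi
      have : i ≤ n := Nat.lt_succ_iff.mp (Finset.mem_range.mp hi)
      have : (n + 1 - i : ℕ) = (n - i) + 1 := by omega
      rw [this]
      push_cast
      ring
    have h2 : (1-q) * ∑ i ∈ Finset.range (n+1), q^i = 1 - q^(n+1) := by
      have := lem_geom q n
      rw [← this, Finset.mul_sum]
      apply Finset.sum_congr rfl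
      intro i _; ring
    rw [h1, mul_add]
    have h3 : (1-q)^2 * ∑ i ∈ Finset.range (n+1), q^i
        = (1-q) * (1 - q^(n+1)) := by
      rw [← h2]; ring
    rw [ih, h3]
    push_cast
    ring

lemma sum_eq (q : ℝ) (k n : ℕ) :
    ∑ i ∈ Finset.range (n+1),
      q^i * (1-q) * (q^k + (1+q)*q^(k+i+1) - 2*q^(k+n+1)*(1 + (1-q)*((n-i : ℕ):ℝ)))
    = q^k*(1 - q^(n+1)) + q^(k+1)*(1 - (q^2)^(n+1))
      - 2*q^(k+n+1)*(1 - q^(n+1))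
      - 2*q^(k+n+1)*((1-q)*n - q + q^(n+1)) := by
  have hc : ∀ i ∈ Finset.range (n+1),
      q^i * (1-q) * (q^k + (1+q)*q^(k+i+1) - 2*q^(k+n+1)*(1 + (1-q)*((n-i : ℕ):ℝ)))
      = q^k * (q^i*(1-q)) + q^(k+1) * ((q^2)^i*(1-q^2))
        - 2*q^(k+n+1) * (q^i*(1-q))
        - 2*q^(k+n+1) * ((1-q)^2 * (q^i*((n-i : ℕ):ℝ))) := by
    intro i _
    ring
  rw [Finset.sum_congr rfl hc]
  rw [Finset.sum_sub_distrib, Finset.sum_sub_distrib, Finset.sum_add_distrib,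
    ← Finset.mul_sum, ← Finset.mul_sum, ← Finset.mul_sum, ← Finset.mul_sum]
  rw [← Finset.mul_sum, lem_lin q n]
  rw [lem_geom q n, lem_geom (q^2) n]

lemma sum_eq2 (ε : ℝ) (k n : ℕ) :
    ∑ i ∈ Finset.range (n+1),
      (1-ε)^i * ε * ((1-ε)^k + (2-ε)*(1-ε)^(k+i+1)
        - 2*(1-ε)^(k+n+1)*(1 + ε*((n-i : ℕ):ℝ)))
    = (1-ε)^k*(1 - (1-ε)^(n+1)) + (1-ε)^(k+1)*(1 - ((1-ε)^2)^(n+1))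
      - 2*(1-ε)^(k+n+1)*(1 - (1-ε)^(n+1))
      - 2*(1-ε)^(k+n+1)*(ε*n - (1-ε) + (1-ε)^(n+1)) := by
  have h := sum_eq (1-ε) k n
  have hc : ∀ i ∈ Finset.range (n+1),
      (1-ε)^i * ε * ((1-ε)^k + (2-ε)*(1-ε)^(k+i+1)
        - 2*(1-ε)^(k+n+1)*(1 + ε*((n-i : ℕ):ℝ)))
      = (1-ε)^i * (1-(1-ε)) * ((1-ε)^k + (1+(1-ε))*(1-ε)^(k+i+1)
        - 2*(1-ε)^(k+n+1)*(1 + (1-(1-ε))*((n-i : ℕ):ℝ))) := by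
    intro i _; ring
  rw [Finset.sum_congr rfl hc, h]
  ring

set_option maxHeartbeats 1000000 in
/-- Appendix A: for all sufficiently small `ε`, the adaptive value in the
finite lower-bound example satisfies
`a(k) > ((4−6ε)/(2−ε))·(1−ε)^k − 8ε` for all `k ≤ D`. -/
theorem adaptive_value_finite_example :
    ∃ ε₀ : ℝ, 0 < ε₀ ∧ ε₀ < 1/2 ∧
      ∀ ε : ℝ, 0 < ε → ε < ε₀ →
      ∀ D : ℕ, ((1 - ε)^D < ε^2 ∧ ∀ D' : ℕ, D' < D → ¬((1 - ε)^D' < ε^2)) →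
      ∀ a : ℕ → ℝ,
        (∀ m, D < m → a m = 0) →
        (∀ k ≤ D, a k = ∑ i ∈ Finset.range (D - k + 1),
            (1 - ε)^i * ε * ((1 - ε)^k + a (k + i + 1))) →
      ∀ k ≤ D, a k > ((4 - 6*ε)/(2 - ε)) * (1 - ε)^k - 8*ε := by
  refine ⟨1/4, by norm_num, by norm_num, ?_⟩
  intro ε hε hε4 D hD a ha0 ha k hk
  have hq0 : (0:ℝ) < 1 - ε := by linarith
  have hq1 : (1:ℝ) - ε ≤ 1 := by linarith
  -- the key downward induction
  have key : ∀ m : ℕ, ∀ j : ℕ, D + 1 - j ≤ m → j ≤ D + 1 →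
      a j ≥ (2-ε)*(1-ε)^j - 2*(1-ε)^(D+1)*(1 + ε*((D+1-j : ℕ):ℝ)) := by
    intro m
    induction m with
    | zero =>
      intro j hjm hj
      have hjD : j = D + 1 := by omega
      subst hjD
      rw [ha0 (D+1) (by omega)]
      simp only [Nat.sub_self, Nat.cast_zero, mul_zero, add_zero]
      have : (0:ℝ) ≤ (1-ε)^(D+1) := pow_nonneg (le_of_lt hq0) _
      nlinarith
    | succ m ih =>
      intro j hjm hj
      by_cases hjD : j = D + 1
      · subst hjD
        rw [ha0 (D+1) (by omega)]
        simp only [Nat.sub_self, Nat.cast_zero, mul_zero, add_zero]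
        have : (0:ℝ) ≤ (1-ε)^(D+1) := pow_nonneg (le_of_lt hq0) _
        nlinarith
      · have hjD' : j ≤ D := by omega
        set n := D - j with hn
        have hDjn : D = j + n := by omega
        rw [ha j hjD']
        have hbound : ∀ i ∈ Finset.range (n+1),
            (1-ε)^i * ε * ((1-ε)^j + (2-ε)*(1-ε)^(j+i+1)
              - 2*(1-ε)^(j+n+1)*(1 + ε*((n-i : ℕ):ℝ)))
            ≤ (1-ε)^i * ε * ((1-ε)^j + a (j+i+1)) := by
          intro i hi
          have hin : i ≤ n := Nat.lt_succ_iff.mp (Finset.mem_range.mp hi)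
          have h1 := ih (j+i+1) (by omega) (by omega)
          have hc1 : (D+1-(j+i+1) : ℕ) = n - i := by omega
          have hc2 : D + 1 = j + n + 1 := by omega
          rw [hc1, hc2] at h1
          have hcoef : (0:ℝ) ≤ (1-ε)^i * ε :=
            mul_nonneg (pow_nonneg (le_of_lt hq0) _) (le_of_lt hε)
          apply mul_le_mul_of_nonneg_left _ hcoef
          linarith
        have hsum := Finset.sum_le_sum hbound
        rw [sum_eq2 ε j n] at hsum
        have hgoal : D - j = n := by omega
        have hc3 : (D+1-j : ℕ) = n + 1 := by omega
        have hc2 : D + 1 = j + n + 1 := by omega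
        rw [hgoal, hc3, hc2]
        have hpow : (1-ε)^(j+2*n+3) ≤ (1-ε)^(j+n+1) :=
          pow_le_pow_of_le_one (le_of_lt hq0) hq1 (by omega)
        have hclosed : (1-ε)^j*(1 - (1-ε)^(n+1)) + (1-ε)^(j+1)*(1 - ((1-ε)^2)^(n+1))
              - 2*(1-ε)^(j+n+1)*(1 - (1-ε)^(n+1))
              - 2*(1-ε)^(j+n+1)*(ε*(n:ℝ) - (1-ε) + (1-ε)^(n+1))
            = (2-ε)*(1-ε)^j - 2*(1-ε)^(j+n+1)*(1 + ε*((n:ℝ)+1))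
              + ((1-ε)^(j+n+1) - (1-ε)^(j+2*n+3)) := by
          rw [show ((1-ε)^2)^(n+1) = (1-ε)^(2*(n+1)) from (pow_mul (1-ε) 2 (n+1)).symm]
          ring
        have h : (2-ε)*(1-ε)^j - 2*(1-ε)^(j+n+1)*(1 + ε*((n+1 : ℕ):ℝ))
            ≤ (1-ε)^j*(1 - (1-ε)^(n+1)) + (1-ε)^(j+1)*(1 - ((1-ε)^2)^(n+1))
              - 2*(1-ε)^(j+n+1)*(1 - (1-ε)^(n+1))
              - 2*(1-ε)^(j+n+1)*(ε*(n:ℝ) - (1-ε) + (1-ε)^(n+1)) := by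
          rw [hclosed]
          push_cast
          linarith [hpow]
        rw [ge_iff_le]
        exact le_trans h hsum
  -- apply the key bound
  have hak := key (D+1) k (by omega) (by omega)
  -- bound the loss term by 8ε
  have hqD : (1-ε)^(D+1) < ε^2 := by
    calc (1-ε)^(D+1) ≤ (1-ε)^D :=
          pow_le_pow_of_le_one (le_of_lt hq0) hq1 (by omega)
      _ < ε^2 := hD.1
  have hDb : ε^2 * ((D:ℝ)+1) ≤ 2 + 3*ε^2 := by
    rcases Nat.eq_zero_or_pos D with h0 | h1
    · subst h0; norm_num; nlinarith
    · have hm := hD.2 (D-1) (by omega)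
      push_neg at hm
      set mm := D - 1 with hmm
      set h := mm / 2 with hh
      have h2h : 2*h ≤ mm := by omega
      have hq2h : (1-ε)^mm ≤ (1-ε)^(2*h) :=
        pow_le_pow_of_le_one (le_of_lt hq0) hq1 h2h
      have hεqh : ε ≤ (1-ε)^h := by
        have h1 : ε^2 ≤ ((1-ε)^h)^2 := by
          rw [← pow_mul]
          calc ε^2 ≤ (1-ε)^mm := hm
            _ ≤ (1-ε)^(h*2) := by rw [mul_comm]; exact hq2h
        nlinarith [pow_nonneg (le_of_lt hq0) h]
      have hple : ((1+ε)*(1-ε))^h ≤ 1 := by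
        apply pow_le_one₀ (by nlinarith) (by nlinarith)
      have hbin : 1 + (h:ℝ)*ε ≤ (1+ε)^h := by
        have := one_add_mul_le_pow (by linarith : (-2:ℝ) ≤ ε) h
        linarith [this]
      have hprod : (1+ε)^h * ε ≤ 1 := by
        calc (1+ε)^h * ε ≤ (1+ε)^h * (1-ε)^h := by
              apply mul_le_mul_of_nonneg_left hεqh
              exact pow_nonneg (by linarith) _
          _ = ((1+ε)*(1-ε))^h := (mul_pow _ _ _).symm
          _ ≤ 1 := hple
      have hhe : (h:ℝ)*ε^2 ≤ 1 := by nlinarith [pow_nonneg (by linarith : (0:ℝ) ≤ 1+ε) h]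
      have h' : D + 1 ≤ 2*h + 3 := by omega
      have hDle : (D:ℝ) + 1 ≤ 2*(h:ℝ) + 3 := by exact_mod_cast h'
      nlinarith
  have hcast : ((D+1-k : ℕ):ℝ) ≤ (D:ℝ) + 1 := by
    have : (D+1-k : ℕ) ≤ D + 1 := by omega
    exact_mod_cast Nat.cast_le.mpr this
  have hLoss : 2*(1-ε)^(D+1)*(1 + ε*((D+1-k : ℕ):ℝ)) ≤ 8*ε := by
    have hpos : (0:ℝ) ≤ 1 + ε*((D+1-k : ℕ):ℝ) := by
      have : (0:ℝ) ≤ ((D+1-k : ℕ):ℝ) := Nat.cast_nonneg _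
      nlinarith
    have h1a : 2*(1-ε)^(D+1)*(1 + ε*((D+1-k : ℕ):ℝ))
        ≤ 2*ε^2*(1 + ε*((D+1-k : ℕ):ℝ)) := by
      have := mul_le_mul_of_nonneg_right (le_of_lt hqD) hpos
      nlinarith [this]
    have h1b : 2*ε^2*(1 + ε*((D+1-k : ℕ):ℝ)) ≤ 2*ε^2*(1 + ε*((D:ℝ)+1)) := by
      have hinner : 1 + ε*((D+1-k : ℕ):ℝ) ≤ 1 + ε*((D:ℝ)+1) := by
        have := mul_le_mul_of_nonneg_left hcast (le_of_lt hε)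
        linarith
      have h2ε2 : (0:ℝ) ≤ 2*ε^2 := by positivity
      exact mul_le_mul_of_nonneg_left hinner h2ε2
    have h1 : 2*(1-ε)^(D+1)*(1 + ε*((D+1-k : ℕ):ℝ))
        ≤ 2*ε^2*(1 + ε*((D:ℝ)+1)) := le_trans h1a h1b
    have h2 : 2*ε^2*(1 + ε*((D:ℝ)+1)) ≤ 8*ε := by nlinarith
    linarith
  have hqk : (0:ℝ) < (1-ε)^k := pow_pos hq0 k
  have hfrac : (4 - 6*ε)/(2 - ε) < 2 - ε := by
    rw [div_lt_iff₀ (by linarith)]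
    nlinarith [sq_nonneg ε, hε]
  have : ((4 - 6*ε)/(2 - ε)) * (1-ε)^k < (2-ε) * (1-ε)^k :=
    mul_lt_mul_of_pos_right hfrac hqk
  linarith
end
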